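/- Let α be a finite partially ordered set with n elements such that α has a least element and, for every x ∈ α, the set {y ∈ α | y < x} is a chain (linearly ordered). For x ∈ α let h(x) := |{y ∈ α | x ≤ y}| denote the size of the principal up-set at x. Then the number of bijections ℓ : α → {1, 2, …, n} that are strictly order-preserving (x < y implies ℓ(x) < ℓ(y)) equals n! / ∏_{x ∈ α} h(x). (The number of rooted labelings of a rooted tree τ equals |τ|!/τ!, where the tree factorial τ! is the product over vertices v of the order of the subtree rooted at v — the intermediate counting claim in the proof of Proposition 1.22.) -/

import Mathlib

open Finset

/-- Extend a labeling of `α \ {m}` to a labeling of `α` sending `m` to `0`. -/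
def ext1 {α : Type} [DecidableEq α] {n : ℕ} (m : α)
    (ℓ' : {x : α // x ≠ m} ≃ Fin n) : α ≃ Fin (n + 1) where
  toFun x := if h : x = m then 0 else (ℓ' ⟨x, h⟩).succ
  invFun i := if h : i = 0 then m else (ℓ'.symm (i.pred h)).1
  left_inv x := by
    by_cases h : x = m
    · simp [h]
    · simp [h, Fin.succ_ne_zero, Fin.pred_succ]
  right_inv i := by
    by_cases h : i = 0
    · simp [h]
    · simp [h, (ℓ'.symm (i.pred h)).2, Fin.succ_pred]

/-- The number of strictly order-preserving bijections of a finite "forest"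
poset (every strict down-set is a chain) onto `Fin n`, times the product of
the sizes of the principal up-sets, equals `n!`. -/
theorem forest_count (n : ℕ) : ∀ (α : Type) [Fintype α] [PartialOrder α],
    Fintype.card α = n →
    (∀ x : α, IsChain (· ≤ ·) {y : α | y < x}) →
    Nat.card {ℓ : α ≃ Fin n // ∀ x y : α, x < y → ℓ x < ℓ y} *
      ∏ x : α, Nat.card {y : α // x ≤ y} = Nat.factorial n := by
  induction n with
  | zero =>
      intro α _ _ hcard hchain
      haveI : IsEmpty α := Fintype.card_eq_zero_iff.mp hcard
      have h1 : Nat.card {ℓ : α ≃ Fin 0 // ∀ x y : α, x < y → ℓ x < ℓ y} = 1 := by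
        rw [Nat.card_eq_one_iff_unique]
        constructor
        · exact ⟨fun a b => Subtype.ext (Equiv.ext fun x => (IsEmpty.false x).elim)⟩
        · exact ⟨⟨Equiv.equivOfIsEmpty α (Fin 0), fun x => (IsEmpty.false x).elim⟩⟩
      rw [h1]
      simp
  | succ n IH =>
      intro α _ _ hcard hchain
      classical
      -- existence of minimal elements below any element
      have exmin : ∀ y : α, ∃ m : α, IsMin m ∧ m ≤ y := by
        intro y
        obtain ⟨m, hmem, hmin⟩ : ∃ m ∈ univ.filter (· ≤ y), ∀ x ∈ univ.filter (· ≤ y), ¬ x < m := by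
          obtain ⟨m, hm⟩ := Finset.exists_minimal (s := univ.filter (· ≤ y)) ⟨y, by simp⟩
          exact ⟨m, hm.1, fun x hx hlt => hlt.not_ge (hm.2 hx hlt.le)⟩
        simp only [mem_filter, mem_univ, true_and] at hmem
        refine ⟨m, ?_, hmem⟩
        intro b hb
        by_contra hnb
        exact hmin b (by simp [hb.trans hmem]) (lt_of_le_not_ge hb hnb)
      have uniqmin : ∀ (y m₁ m₂ : α), IsMin m₁ → m₁ ≤ y → IsMin m₂ → m₂ ≤ y → m₁ = m₂ := by
        intro y m₁ m₂ h₁ hle₁ h₂ hle₂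
        by_contra hne
        have hcomp : m₁ ≤ m₂ ∨ m₂ ≤ m₁ := by
          rcases eq_or_lt_of_le hle₁ with e₁ | l₁
          · exact Or.inr (e₁ ▸ hle₂)
          · rcases eq_or_lt_of_le hle₂ with e₂ | l₂
            · exact Or.inl (e₂ ▸ hle₁)
            · exact hchain y l₁ l₂ hne
        rcases hcomp with h | h
        · exact hne (le_antisymm h (h₂ h))
        · exact hne (le_antisymm (h₁ h) h)
      choose g hg using exmin
      set f : α → ℕ := fun x => Nat.card {y : α // x ≤ y} with hf
      set S : Finset α := univ.filter (fun m => IsMin m) with hS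
      -- the sum of up-set sizes over minimal elements is the whole cardinality
      have hsum : ∑ m ∈ S, f m = n + 1 := by
        have key : ∀ m ∈ S, f m = (univ.filter (fun y => g y = m)).card := by
          intro m hm
          simp only [hS, mem_filter, mem_univ, true_and] at hm
          show Nat.card {y : α // m ≤ y} = _
          rw [Nat.card_eq_fintype_card, Fintype.card_subtype]
          congr 1
          ext y
          simp only [mem_filter, mem_univ, true_and]
          constructor
          · intro h
            exact (uniqmin y m (g y) hm h (hg y).1 (hg y).2).symm
          · intro h
            exact h ▸ (hg y).2
        have h2 := Finset.card_eq_sum_card_fiberwise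
          (f := g) (s := (univ : Finset α)) (t := S) (fun y _ => by simp [hS, (hg y).1])
        rw [Finset.sum_congr rfl key, ← h2, Finset.card_univ, hcard]
      -- the decomposition bijection
      set M := {m : α // IsMin m} with hM
      set T : M → Type := fun m =>
        {ℓ : {x : α // x ≠ m.1} ≃ Fin n // ∀ x y : {x : α // x ≠ m.1}, x < y → ℓ x < ℓ y} with hT
      have Bvalid : ∀ (m : M) (ℓ' : T m) (x y : α), x < y →
          ext1 m.1 ℓ'.1 x < ext1 m.1 ℓ'.1 y := by
        intro m ℓ' x y hxy
        by_cases hx : x = m.1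
        · by_cases hy : y = m.1
          · exact absurd (hx ▸ hy ▸ hxy) (lt_irrefl _)
          · simp only [ext1, Equiv.coe_fn_mk, dif_pos hx, dif_neg hy]
            exact Fin.succ_pos _
        · by_cases hy : y = m.1
          · subst hy
            exact absurd (hxy.trans_le (m.2 hxy.le)) (lt_irrefl x)
          · simp only [ext1, Equiv.coe_fn_mk, dif_neg hx, dif_neg hy, Fin.succ_lt_succ_iff]
            exact ℓ'.2 ⟨x, hx⟩ ⟨y, hy⟩ (Subtype.mk_lt_mk.mpr hxy)
      set B : (Σ m : M, T m) → {ℓ : α ≃ Fin (n+1) // ∀ x y : α, x < y → ℓ x < ℓ y} :=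
        fun σ => ⟨ext1 σ.1.1 σ.2.1, Bvalid σ.1 σ.2⟩ with hB
      have Bsymm0 : ∀ σ : Σ m : M, T m, (B σ).1.symm 0 = σ.1.1 := by
        intro σ
        simp [hB, ext1]
      have Binj : Function.Injective B := by
        intro σ₁ σ₂ heq
        obtain ⟨m₁, ℓ₁⟩ := σ₁
        obtain ⟨m₂, ℓ₂⟩ := σ₂
        have hm : m₁ = m₂ := by
          apply Subtype.ext
          rw [← Bsymm0 ⟨m₁, ℓ₁⟩, ← Bsymm0 ⟨m₂, ℓ₂⟩, heq]
        subst hm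
        have hℓ : ℓ₁ = ℓ₂ := by
          apply Subtype.ext
          apply Equiv.ext
          intro x
          have := congrArg (fun t => t.1 x.1) heq
          simp only [hB, ext1, Equiv.coe_fn_mk, dif_neg x.2] at this
          exact Fin.succ_inj.mp this
        rw [hℓ]
      have Bsurj : Function.Surjective B := by
        intro ℓ
        have hzero : ℓ.1 (ℓ.1.symm 0) = 0 := ℓ.1.apply_symm_apply 0
        have hmin0 : IsMin (ℓ.1.symm 0) := by
          intro b hb
          rcases eq_or_lt_of_le hb with e | l
          · exact e.ge
          · exact absurd (hzero ▸ ℓ.2 b _ l) (Fin.not_lt_zero _)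
        have hne0 : ∀ x : {x : α // x ≠ ℓ.1.symm 0}, ℓ.1 x.1 ≠ 0 := by
          intro x h
          exact x.2 (ℓ.1.eq_symm_apply.mpr h)
        set inner : {x : α // x ≠ ℓ.1.symm 0} ≃ Fin n :=
          { toFun := fun x => (ℓ.1 x.1).pred (hne0 x)
            invFun := fun j => ⟨ℓ.1.symm j.succ, by
              intro h
              exact Fin.succ_ne_zero j (ℓ.1.symm.injective (h : ℓ.1.symm j.succ = ℓ.1.symm 0))⟩
            left_inv := fun x => by
              apply Subtype.ext
              simp [Fin.succ_pred]
            right_inv := fun j => by simp [Fin.pred_succ] } with hinner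
        have hvalid : ∀ x y : {x : α // x ≠ ℓ.1.symm 0}, x < y → inner x < inner y := by
          intro x y hxy
          simp only [hinner, Equiv.coe_fn_mk]
          exact Fin.pred_lt_pred_iff.mpr (ℓ.2 x.1 y.1 (Subtype.coe_lt_coe.mpr hxy))
        refine ⟨⟨⟨ℓ.1.symm 0, hmin0⟩, ⟨inner, hvalid⟩⟩, ?_⟩
        apply Subtype.ext
        apply Equiv.ext
        intro x
        show ext1 (ℓ.1.symm 0) inner x = ℓ.1 x
        by_cases h : x = ℓ.1.symm 0
        · subst h
          simp [ext1, hzero]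
        · simp [ext1, h, hinner, Fin.succ_pred]
      -- sum over minimal elements
      have hNsigma : Nat.card {ℓ : α ≃ Fin (n+1) // ∀ x y : α, x < y → ℓ x < ℓ y}
          = ∑ m : M, Nat.card (T m) := by
        rw [Nat.card_congr (Equiv.ofBijective B ⟨Binj, Bsurj⟩).symm,
          Nat.card_eq_fintype_card, Fintype.card_sigma]
        exact Finset.sum_congr rfl fun m _ => (Nat.card_eq_fintype_card).symm
      -- for each minimal m, the product factors
      have hfac : ∀ m : M, Nat.card (T m) * ∏ x : α, f x = f m.1 * Nat.factorial n := by
        intro m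
        have hcardβ : Fintype.card {x : α // x ≠ m.1} = n := by
          have h1 := Fintype.card_subtype_compl (fun x : α => x = m.1)
          simp only [Fintype.card_subtype_eq, hcard] at h1
          convert h1 using 2
          omega
        have hchainβ : ∀ x : {x : α // x ≠ m.1},
            IsChain (· ≤ ·) {y : {x : α // x ≠ m.1} | y < x} := by
          intro x a ha b hb hab
          have := hchain x.1 (Subtype.coe_lt_coe.mpr ha) (Subtype.coe_lt_coe.mpr hb)
            (fun h => hab (Subtype.ext h))
          rcases this with h | h
          · exact Or.inl (Subtype.coe_le_coe.mp h)
          · exact Or.inr (Subtype.coe_le_coe.mp h)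
        have hup : ∀ x : {x : α // x ≠ m.1},
            Nat.card {y : {x : α // x ≠ m.1} // x ≤ y} = f x.1 := by
          intro x
          apply Nat.card_congr
          exact ⟨fun y => ⟨y.1.1, Subtype.coe_le_coe.mpr y.2⟩,
            fun y => ⟨⟨y.1, fun h => x.2 (le_antisymm (le_of_le_of_eq y.2 h) (m.2 (le_of_le_of_eq y.2 h)))⟩,
              Subtype.coe_le_coe.mp y.2⟩, fun y => rfl, fun y => rfl⟩
        have hsplit : ∏ x : α, f x = f m.1 * ∏ x : {x : α // x ≠ m.1}, f x.1 := by
          rw [← Finset.mul_prod_erase univ f (mem_univ m.1)]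
          congr 1
          exact Finset.prod_subtype (univ.erase m.1) (by simp) f
        have hIH := IH {x : α // x ≠ m.1} hcardβ hchainβ
        calc Nat.card (T m) * ∏ x : α, f x
            = f m.1 * (Nat.card (T m) * ∏ x : {x : α // x ≠ m.1}, f x.1) := by
              rw [hsplit]; ring
          _ = f m.1 * Nat.factorial n := by
              congr 1
              rw [← hIH]
              congr 1
              exact Finset.prod_congr rfl fun x _ => (hup x).symm
      -- put it all together
      have hMsum : ∑ m : M, f m.1 = n + 1 := by
        rw [← hsum]
        exact (Finset.sum_subtype S (by simp [hS]) f).symm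
      calc Nat.card {ℓ : α ≃ Fin (n+1) // ∀ x y : α, x < y → ℓ x < ℓ y} * ∏ x : α, f x
          = ∑ m : M, Nat.card (T m) * ∏ x : α, f x := by rw [hNsigma, Finset.sum_mul]
        _ = ∑ m : M, f m.1 * Nat.factorial n := Finset.sum_congr rfl fun m _ => hfac m
        _ = (n + 1) * Nat.factorial n := by rw [← Finset.sum_mul, hMsum]
        _ = Nat.factorial (n + 1) := (Nat.factorial_succ n).symm

/-- The number of rooted labelings of a rooted tree `τ` equals `|τ|!/τ!`:
for a finite poset with a least element in which the strict down-set of every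
element is a chain, the number of strictly order-preserving bijections onto
`{1, …, n}` is `n!` divided by the product of the sizes of the principal
up-sets. -/
theorem rooted_labelings_count
    (α : Type) [Fintype α] [PartialOrder α]
    (n : ℕ) (hn : Fintype.card α = n)
    (hbot : ∃ m : α, ∀ x : α, m ≤ x)
    (hchain : ∀ x : α, IsChain (· ≤ ·) {y : α | y < x}) :
    Nat.card {ℓ : α ≃ Fin n // ∀ x y : α, x < y → ℓ x < ℓ y} =
      Nat.factorial n / ∏ x : α, Nat.card {y : α // x ≤ y} := by
  have hpos : 0 < ∏ x : α, Nat.card {y : α // x ≤ y} := by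
    apply Finset.prod_pos
    intro x _
    have : Nonempty {y : α // x ≤ y} := ⟨⟨x, le_refl x⟩⟩
    exact Nat.card_pos
  exact (Nat.div_eq_of_eq_mul_left hpos (forest_count n α hn hchain).symm).symm
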